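/- For each n ∈ ℕ let A_n be a symmetric (0,2)-tensor field on P_n, and assume that for every n ∈ ℕ and each scalar patched Markov embedding G_n : P_n → P_{n+1}, the pullback of A_{n+1} by G_n equals A_n. Then for all n ∈ ℕ and all distinct i, j ∈ Ω_{n+1}, the two quantities A_n(Z_i^n, Z_i^n)_{b_n} / (n(n+1)) and −A_n(Z_i^n, Z_j^n)_{b_n} / (n+1) coincide, and this common quantity is independent of n ∈ ℕ and of i, j ∈ Ω_{n+1}. -/

import Mathlib

open Finset

noncomputable section

/-- `Psim n` is the space `P_n` of positive probability measures on
`Ω_{n+1} = {1,…,n+1}`, viewed as a subset of `ℝ^{n+1}`. -/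
def Psim (n : ℕ) : Set (Fin (n + 1) → ℝ) :=
  {p | (∀ i, p i ∈ Set.Ioo (0 : ℝ) 1) ∧ ∑ i, p i = 1}

/-- The tangent space of `P_n` (at any point): vectors in `ℝ^{n+1}` whose
coordinates sum to zero. -/
def Tang (n : ℕ) : Set (Fin (n + 1) → ℝ) :=
  {X | ∑ i, X i = 0}

/-- `B` is a symmetric bilinear form on `ℝ^{n+1}` (the value of a symmetric
`(0,2)`-tensor field at a point). -/
def IsSymmBilin {n : ℕ} (B : (Fin (n + 1) → ℝ) → (Fin (n + 1) → ℝ) → ℝ) : Prop :=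
  (∀ X Y, B X Y = B Y X) ∧
  (∀ (c : ℝ) (X X' Y : Fin (n + 1) → ℝ), B (c • X + X') Y = c * B X Y + B X' Y)

/-- `A` is a family of symmetric `(0,2)`-tensor fields `A_n` on `P_n`
(indices `n ≥ 1`, matching the paper's `ℕ = {1,2,…}`). -/
def SymmTF (A : (n : ℕ) → (Fin (n + 1) → ℝ) → (Fin (n + 1) → ℝ) → (Fin (n + 1) → ℝ) → ℝ) :
    Prop :=
  ∀ n : ℕ, 0 < n → ∀ p ∈ Psim n, IsSymmBilin (A n p)

/-- The scalar patched Markov embedding `G_n^{α,σ} : P_n → P_{n+1}`,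
`G_n^{α,σ}(p) = α ∑_{i ∈ Ω_{n+1}} p(i) δ_{σ(i)} + (1-α) δ_{σ(n+2)}`. -/
def sPatch (n : ℕ) (α : ℝ) (σ : Equiv.Perm (Fin (n + 2))) (p : Fin (n + 1) → ℝ) :
    Fin (n + 2) → ℝ := fun I =>
  α * ∑ i : Fin (n + 1), p i * (if σ i.castSucc = I then 1 else 0) +
    (1 - α) * (if σ (Fin.last (n + 1)) = I then 1 else 0)

/-- The differential of `G_n^{α,σ}`: `dG(X) = α ∑_i X^i δ_{σ(i)}`. -/
def sPatchD (n : ℕ) (α : ℝ) (σ : Equiv.Perm (Fin (n + 2))) (X : Fin (n + 1) → ℝ) :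
    Fin (n + 2) → ℝ := fun I =>
  α * ∑ i : Fin (n + 1), X i * (if σ i.castSucc = I then 1 else 0)

/-- A general patched Markov embedding `G_n : P_n → P_{n+1}` with weights `a_i`:
`G_n(p) = ∑_i p(i) (a_i δ_{σ(i)} + (1-a_i) δ_{σ(n+2)})`. -/
def patch (n : ℕ) (a : Fin (n + 1) → ℝ) (σ : Equiv.Perm (Fin (n + 2)))
    (p : Fin (n + 1) → ℝ) : Fin (n + 2) → ℝ := fun I =>
  ∑ i : Fin (n + 1), p i * (a i * (if σ i.castSucc = I then 1 else 0) +
    (1 - a i) * (if σ (Fin.last (n + 1)) = I then 1 else 0))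

/-- The differential of a patched Markov embedding. -/
def patchD (n : ℕ) (a : Fin (n + 1) → ℝ) (σ : Equiv.Perm (Fin (n + 2)))
    (X : Fin (n + 1) → ℝ) : Fin (n + 2) → ℝ := fun I =>
  ∑ i : Fin (n + 1), X i * (a i * (if σ i.castSucc = I then 1 else 0) +
    (1 - a i) * (if σ (Fin.last (n + 1)) = I then 1 else 0))

/-- Invariance of the family `{A_n}` under scalar patched Markov embeddings:
the pullback of `A_{n+1}` by each `G_n^{α,σ}` equals `A_n`. -/
def InvariantSP
    (A : (n : ℕ) → (Fin (n + 1) → ℝ) → (Fin (n + 1) → ℝ) → (Fin (n + 1) → ℝ) → ℝ) : Prop :=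
  ∀ n : ℕ, 0 < n → ∀ α ∈ Set.Ioo (0 : ℝ) 1, ∀ σ : Equiv.Perm (Fin (n + 2)),
    ∀ p ∈ Psim n, ∀ X ∈ Tang n, ∀ Y ∈ Tang n,
      A (n + 1) (sPatch n α σ p) (sPatchD n α σ X) (sPatchD n α σ Y) = A n p X Y

/-- The vector field `Z_i^n` on `P_n`, with (constant) coordinates
`e_i - (1/(n+1)) ∑_j e_j`. -/
def Zvec (n : ℕ) (i : Fin (n + 1)) : Fin (n + 1) → ℝ :=
  fun k => (if k = i then 1 else 0) - 1 / (n + 1)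

/-- The uniform probability measure `b_n ∈ P_n`. -/
def bunif (n : ℕ) : Fin (n + 1) → ℝ := fun _ => 1 / (n + 1)

/-- The point `p_u ∈ P_1`: `p_u(1) = u`, `p_u(2) = 1 - u`. -/
def pu (u : ℝ) : Fin 2 → ℝ := ![u, 1 - u]

/-- The tensor field `A_n^d(X,Y)_p = ∑_i X^i Y^i / p(i)²`. -/
def Ad (n : ℕ) (p X Y : Fin (n + 1) → ℝ) : ℝ := ∑ i, X i * Y i / (p i) ^ 2

/-- The tensor field `A_n^s(X,Y)_p = (∑_i X^i/p(i)) (∑_j Y^j/p(j))`. -/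
def As (n : ℕ) (p X Y : Fin (n + 1) → ℝ) : ℝ := (∑ i, X i / p i) * (∑ j, Y j / p j)

/-- The Fisher metric `g_n^F(X,Y)_p = ∑_i X^i Y^i / p(i)`. -/
def Fish (n : ℕ) (p X Y : Fin (n + 1) → ℝ) : ℝ := ∑ i, X i * Y i / p i

/-- The point `ψ_u^σ(α) = G_1^{α,σ}(p_u) ∈ P_2` (the indices `1,2,3` of `Ω_3`
are `0,1,2 : Fin 3`). -/
def psiPt (α u : ℝ) (σ : Equiv.Perm (Fin 3)) : Fin 3 → ℝ := sPatch 1 α σ (pu u)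

/-- `E^k ⊂ TP_2`: the line spanned by `Z_i^2 - Z_j^2 = e_i - e_j` where
`{i,j,k} = {0,1,2}`; equivalently, the sum-zero vectors vanishing at `k`. -/
def Esub (k : Fin 3) : Set (Fin 3 → ℝ) := {W | (∑ i, W i = 0) ∧ W k = 0}

/-- `u_α^{ij}` (formed with `σ = id`). -/
def uRatio (α u : ℝ) (i j : Fin 3) : ℝ :=
  psiPt α u (Equiv.refl (Fin 3)) i /
    (psiPt α u (Equiv.refl (Fin 3)) i + psiPt α u (Equiv.refl (Fin 3)) j)

/-- The image `dH^{ij}_q(Z_1^1) = ((q(i)+q(j))/2) (Z_i^2 - Z_j^2)` of `Z_1^1`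
under the differential of `H_q^{ij} : P_1 → P_2`. -/
def dHvec (q : Fin 3 → ℝ) (i j : Fin 3) : Fin 3 → ℝ :=
  ((q i + q j) / 2) • (Zvec 2 i - Zvec 2 j)

/-- Condition (C1) for `A_2`. -/
def CondC1 (A2 : (Fin 3 → ℝ) → (Fin 3 → ℝ) → (Fin 3 → ℝ) → ℝ) : Prop :=
  ∃ r : ℝ → ℝ, (∀ t : ℝ, 0 < t → 0 < r t) ∧ (∀ t : ℝ, 0 < t → r t * r (1 / t) = 1) ∧
    ∀ α ∈ Set.Ioo (0 : ℝ) 1, ∀ u ∈ Set.Ioo (0 : ℝ) 1, ∀ σ : Equiv.Perm (Fin 3),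
      ∀ W1 W2 W3 : Fin 3 → ℝ, W1 ∈ Esub (σ 0) → W2 ∈ Esub (σ 1) → W3 ∈ Esub (σ 2) →
        W3 = W1 + W2 →
        A2 (psiPt α u σ) W3 W1 = r (u / (1 - u)) * A2 (psiPt α u σ) W3 W2

/-- Condition (C2) for `A_1` and `A_2`: `A_1` is positive semidefinite and
degenerate at `b_1`, and the parallelism identity holds. -/
def CondC2 (A1 : (Fin 2 → ℝ) → (Fin 2 → ℝ) → (Fin 2 → ℝ) → ℝ)
    (A2 : (Fin 3 → ℝ) → (Fin 3 → ℝ) → (Fin 3 → ℝ) → ℝ) : Prop :=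
  (∀ p ∈ Psim 1, ∀ X ∈ Tang 1, 0 ≤ A1 p X X) ∧
  (∃ X ∈ Tang 1, X ≠ 0 ∧ ∀ Y ∈ Tang 1, A1 (bunif 1) X Y = 0) ∧
  (∀ α ∈ Set.Ioo (0 : ℝ) 1, ∀ u ∈ Set.Ioo (0 : ℝ) 1, ∀ σ : Equiv.Perm (Fin 3),
    ∀ i j k l : Fin 3, i ≠ j → k ≠ l →
      A2 (psiPt α u σ) (dHvec (psiPt α u σ) (σ i) (σ j)) (dHvec (psiPt α u σ) (σ k) (σ l)) =
        (Real.sign (2 * uRatio α u i j - 1) *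
            Real.sqrt (A1 (pu (uRatio α u i j)) (Zvec 1 0) (Zvec 1 0))) *
        (Real.sign (2 * uRatio α u k l - 1) *
            Real.sqrt (A1 (pu (uRatio α u k l)) (Zvec 1 0) (Zvec 1 0))))

/-- `H : P_m → P_n` (together with its linear differential `dH`) is a
composition of scalar patched Markov embeddings. -/
inductive IsSPMComp :
    (m n : ℕ) → ((Fin (m + 1) → ℝ) → (Fin (n + 1) → ℝ)) →
      ((Fin (m + 1) → ℝ) → (Fin (n + 1) → ℝ)) → Prop
  | refl (m : ℕ) : IsSPMComp m m id id
  | step {m n : ℕ} {H dH : (Fin (m + 1) → ℝ) → (Fin (n + 1) → ℝ)} (α : ℝ)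
      (hα : α ∈ Set.Ioo (0 : ℝ) 1) (σ : Equiv.Perm (Fin (n + 2)))
      (h : IsSPMComp m n H dH) :
      IsSPMComp m (n + 1) (fun p => sPatch n α σ (H p)) (fun X => sPatchD n α σ (dH X))

/-- `Q` is a Markov partition: each `Q i` is a probability measure on `Ω_{N+1}`
and the supports of the `Q i` are pairwise disjoint with union `Ω_{N+1}`. -/
def IsMarkovPartition {n N : ℕ} (Q : Fin (n + 1) → Fin (N + 1) → ℝ) : Prop :=
  (∀ i, (∀ I, 0 ≤ Q i I) ∧ ∑ I, Q i I = 1) ∧ (∀ I, ∃! i, Q i I ≠ 0)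

/-- The Markov embedding `F(p) = ∑_i p(i) Q_i` induced by `Q` (the same formula
gives its differential on tangent vectors). -/
def mEmb {n N : ℕ} (Q : Fin (n + 1) → Fin (N + 1) → ℝ) (p : Fin (n + 1) → ℝ) :
    Fin (N + 1) → ℝ := fun I => ∑ i, p i * Q i I

/-- `A_n^{λ,μ} = λ A_n^d + μ A_n^s`. -/
def Alm (n : ℕ) (lam mu : ℝ) (p X Y : Fin (n + 1) → ℝ) : ℝ :=
  lam * Ad n p X Y + mu * As n p X Y
namespace DOUaux

section Bilin
variable {n : ℕ} {B : (Fin (n + 1) → ℝ) → (Fin (n + 1) → ℝ) → ℝ}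

lemma bil_zero (h : IsSymmBilin B) (Y : Fin (n+1) → ℝ) : B 0 Y = 0 := by
  have h0 := h.2 1 0 0 Y
  simp only [one_smul, add_zero, one_mul] at h0
  linarith

lemma bil_add (h : IsSymmBilin B) (X X' Y : Fin (n+1) → ℝ) :
    B (X + X') Y = B X Y + B X' Y := by
  have h0 := h.2 1 X X' Y
  simpa using h0

lemma bil_smul (h : IsSymmBilin B) (c : ℝ) (X Y : Fin (n+1) → ℝ) :
    B (c • X) Y = c * B X Y := by
  have h0 := h.2 c X 0 Y
  rw [add_zero] at h0
  rw [h0, bil_zero h, add_zero]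

lemma bil_sum (h : IsSymmBilin B) {ι : Type*} (s : Finset ι) (X : ι → (Fin (n+1) → ℝ))
    (Y : Fin (n+1) → ℝ) : B (∑ i ∈ s, X i) Y = ∑ i ∈ s, B (X i) Y := by
  induction s using Finset.cons_induction with
  | empty => simpa using bil_zero h Y
  | cons a s ha ih => rw [Finset.sum_cons, Finset.sum_cons, bil_add h, ih]

lemma bil_expand (h : IsSymmBilin B) (a b : ℝ) (X Y X' Y' : Fin (n+1) → ℝ) :
    B (a • X + b • Y) (a • X' + b • Y') =
      a * a * B X X' + a * b * B X Y' + a * b * B Y X' + b * b * B Y Y' := by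
  have hr : ∀ Z W W' : Fin (n+1) → ℝ, B Z (W + W') = B Z W + B Z W' := by
    intro Z W W'; rw [h.1, bil_add h, h.1, h.1 W']
  have hrs : ∀ (c : ℝ) (Z W : Fin (n+1) → ℝ), B Z (c • W) = c * B Z W := by
    intro c Z W; rw [h.1, bil_smul h, h.1]
  rw [bil_add h, bil_smul h, bil_smul h, hr, hr, hrs, hrs, hrs, hrs]
  ring

end Bilin

lemma bunif_mem {n : ℕ} (hn : 0 < n) : bunif n ∈ Psim n := by
  have h1 : (1:ℝ) ≤ (n:ℝ) := by exact_mod_cast hn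
  constructor
  · intro i
    show (0:ℝ) < 1 / (n+1) ∧ (1:ℝ)/(n+1) < 1
    constructor
    · positivity
    · rw [div_lt_one (by positivity)]
      linarith
  · show ∑ _i : Fin (n+1), (1:ℝ)/(n+1) = 1
    rw [Finset.sum_const, Finset.card_univ, Fintype.card_fin, nsmul_eq_mul]
    push_cast
    field_simp

lemma Zvec_mem {n : ℕ} (i : Fin (n+1)) : Zvec n i ∈ Tang n := by
  show ∑ k : Fin (n+1), ((if k = i then (1:ℝ) else 0) - 1/(n+1)) = 0
  rw [Finset.sum_sub_distrib, Finset.sum_ite_eq' Finset.univ i (fun _ => (1:ℝ))]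
  rw [Finset.sum_const, Finset.card_univ, Fintype.card_fin, nsmul_eq_mul]
  push_cast
  field_simp
  simp

lemma ind_sum {n : ℕ} (σ : Equiv.Perm (Fin (n+2))) (I : Fin (n+2)) :
    ∑ i : Fin (n+1), (if σ i.castSucc = I then (1:ℝ) else 0)
      = 1 - (if σ (Fin.last (n+1)) = I then (1:ℝ) else 0) := by
  have h2 : ∑ J : Fin (n+2), (if σ J = I then (1:ℝ) else 0) = 1 := by
    have h3 : ∀ J : Fin (n+2), (if σ J = I then (1:ℝ) else 0) = (if J = σ.symm I then (1:ℝ) else 0) := by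
      intro J
      congr 1
      simp [Equiv.apply_eq_iff_eq_symm_apply]
    rw [Finset.sum_congr rfl (fun J _ => h3 J)]
    rw [Finset.sum_ite_eq' Finset.univ (σ.symm I) (fun _ => (1:ℝ))]
    simp
  rw [Fin.sum_univ_castSucc] at h2
  linarith

lemma alpha_mem (n : ℕ) : ((n:ℝ)+1)/((n:ℝ)+2) ∈ Set.Ioo (0:ℝ) 1 := by
  have h0 : (0:ℝ) ≤ (n:ℝ) := Nat.cast_nonneg n
  constructor
  · positivity
  · rw [div_lt_one (by positivity)]
    linarith

lemma sPatch_bunif (n : ℕ) (σ : Equiv.Perm (Fin (n+2))) :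
    sPatch n (((n:ℝ)+1)/((n:ℝ)+2)) σ (bunif n) = bunif (n+1) := by
  have h0 : (0:ℝ) ≤ (n:ℝ) := Nat.cast_nonneg n
  funext I
  show ((n:ℝ)+1)/((n:ℝ)+2) * ∑ i : Fin (n+1), (1:ℝ)/((n:ℝ)+1) * (if σ i.castSucc = I then 1 else 0)
    + (1 - ((n:ℝ)+1)/((n:ℝ)+2)) * (if σ (Fin.last (n+1)) = I then 1 else 0) = 1/(((n+1:ℕ):ℝ)+1)
  rw [← Finset.mul_sum, ind_sum]
  push_cast
  set t : ℝ := if σ (Fin.last (n+1)) = I then 1 else 0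
  field_simp
  ring

lemma sPatchD_Zvec (n : ℕ) (α : ℝ) (σ : Equiv.Perm (Fin (n+2))) (i : Fin (n+1)) :
    sPatchD n α σ (Zvec n i) =
      α • Zvec (n+1) (σ i.castSucc) + (α * (1/((n:ℝ)+1))) • Zvec (n+1) (σ (Fin.last (n+1))) := by
  have h0 : (0:ℝ) ≤ (n:ℝ) := Nat.cast_nonneg n
  funext I
  show α * ∑ j : Fin (n+1), ((if j = i then (1:ℝ) else 0) - 1/((n:ℝ)+1)) * (if σ j.castSucc = I then 1 else 0)
    = α * ((if I = σ i.castSucc then (1:ℝ) else 0) - 1/(((n+1:ℕ):ℝ)+1))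
      + (α * (1/((n:ℝ)+1))) * ((if I = σ (Fin.last (n+1)) then (1:ℝ) else 0) - 1/(((n+1:ℕ):ℝ)+1))
  have hsum : ∑ j : Fin (n+1), ((if j = i then (1:ℝ) else 0) - 1/((n:ℝ)+1)) * (if σ j.castSucc = I then 1 else 0)
      = (if σ i.castSucc = I then (1:ℝ) else 0)
        - 1/((n:ℝ)+1) * (1 - (if σ (Fin.last (n+1)) = I then (1:ℝ) else 0)) := by
    have hsplit : ∀ j : Fin (n+1), ((if j = i then (1:ℝ) else 0) - 1/((n:ℝ)+1)) * (if σ j.castSucc = I then 1 else 0)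
        = (if j = i then (1:ℝ) else 0) * (if σ j.castSucc = I then 1 else 0)
          - 1/((n:ℝ)+1) * (if σ j.castSucc = I then 1 else 0) := by
      intro j; ring
    rw [Finset.sum_congr rfl (fun j _ => hsplit j), Finset.sum_sub_distrib, ← Finset.mul_sum, ind_sum]
    congr 1
    have hb : ∀ j : Fin (n+1), (if j = i then (1:ℝ) else 0) * (if σ j.castSucc = I then 1 else 0)
        = if j = i then (if σ j.castSucc = I then (1:ℝ) else 0) else 0 := by
      intro j; by_cases hj : j = i <;> simp [hj]
    rw [Finset.sum_congr rfl (fun j _ => hb j)]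
    rw [Finset.sum_ite_eq' Finset.univ i (fun j => if σ (Fin.castSucc j) = I then (1:ℝ) else 0)]
    simp
  rw [hsum]
  have e1 : (if I = σ i.castSucc then (1:ℝ) else 0) = (if σ i.castSucc = I then (1:ℝ) else 0) := by
    simp [eq_comm]
  have e2 : (if I = σ (Fin.last (n+1)) then (1:ℝ) else 0) = (if σ (Fin.last (n+1)) = I then (1:ℝ) else 0) := by
    simp [eq_comm]
  rw [e1, e2]
  push_cast
  set s : ℝ := if σ i.castSucc = I then 1 else 0
  set t : ℝ := if σ (Fin.last (n+1)) = I then 1 else 0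
  field_simp
  ring

lemma perm3 {β : Type*} [DecidableEq β] {a b c I J K : β}
    (hab : a ≠ b) (hac : a ≠ c) (hbc : b ≠ c) (hIJ : I ≠ J) (hIK : I ≠ K) (hJK : J ≠ K) :
    ∃ σ : Equiv.Perm β, σ a = I ∧ σ b = J ∧ σ c = K := by
  classical
  set τ₁ := Equiv.swap a I with hτ₁
  set τ₂ := Equiv.swap (τ₁ b) J with hτ₂
  set τ₃ := Equiv.swap (τ₂ (τ₁ c)) K with hτ₃
  refine ⟨(τ₁.trans τ₂).trans τ₃, ?_, ?_, ?_⟩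
  · have h1 : τ₁ a = I := Equiv.swap_apply_left a I
    have h2 : τ₂ I = I := by
      apply Equiv.swap_apply_of_ne_of_ne
      · rw [← h1]; exact fun h => hab (τ₁.injective h)
      · exact hIJ
    have h3 : τ₃ I = I := by
      apply Equiv.swap_apply_of_ne_of_ne
      · intro h
        apply hac
        apply τ₁.injective
        rw [h1]
        apply τ₂.injective
        rw [h2]
        exact h
      · exact hIK
    simp only [Equiv.trans_apply]
    rw [h1, h2, h3]
  · have h1 : τ₂ (τ₁ b) = J := Equiv.swap_apply_left _ _
    have h2 : τ₃ J = J := by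
      apply Equiv.swap_apply_of_ne_of_ne
      · rw [← h1]; exact fun h => hbc (τ₁.injective (τ₂.injective h))
      · exact hJK
    simp only [Equiv.trans_apply]
    rw [h1, h2]
  · simp only [Equiv.trans_apply]
    exact Equiv.swap_apply_left _ _

variable {A : (n : ℕ) → (Fin (n + 1) → ℝ) → (Fin (n + 1) → ℝ) → (Fin (n + 1) → ℝ) → ℝ}

lemma key (hinv : InvariantSP A) {n : ℕ} (hn : 0 < n) (σ : Equiv.Perm (Fin (n+2)))
    (i j : Fin (n+1)) :
    A (n+1) (bunif (n+1)) (sPatchD n (((n:ℝ)+1)/((n:ℝ)+2)) σ (Zvec n i))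
        (sPatchD n (((n:ℝ)+1)/((n:ℝ)+2)) σ (Zvec n j))
      = A n (bunif n) (Zvec n i) (Zvec n j) := by
  have h := hinv n hn _ (alpha_mem n) σ (bunif n) (bunif_mem hn) (Zvec n i) (Zvec_mem i)
    (Zvec n j) (Zvec_mem j)
  rwa [sPatch_bunif] at h

lemma keyPoly (hsymm : SymmTF A) (hinv : InvariantSP A) {n : ℕ} (hn : 0 < n)
    (σ : Equiv.Perm (Fin (n+2))) (i j : Fin (n+1)) :
    ((n:ℝ)+1)^2 * A (n+1) (bunif (n+1)) (Zvec (n+1) (σ i.castSucc)) (Zvec (n+1) (σ j.castSucc))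
      + ((n:ℝ)+1) * A (n+1) (bunif (n+1)) (Zvec (n+1) (σ i.castSucc)) (Zvec (n+1) (σ (Fin.last (n+1))))
      + ((n:ℝ)+1) * A (n+1) (bunif (n+1)) (Zvec (n+1) (σ (Fin.last (n+1)))) (Zvec (n+1) (σ j.castSucc))
      + A (n+1) (bunif (n+1)) (Zvec (n+1) (σ (Fin.last (n+1)))) (Zvec (n+1) (σ (Fin.last (n+1))))
      = ((n:ℝ)+2)^2 * A n (bunif n) (Zvec n i) (Zvec n j) := by
  have hk := key hinv hn σ i j
  rw [sPatchD_Zvec, sPatchD_Zvec,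
    bil_expand (hsymm (n+1) (by omega) _ (bunif_mem (by omega)))] at hk
  have h1 : ((n:ℝ)+1) ≠ 0 := by positivity
  have h2 : ((n:ℝ)+2) ≠ 0 := by positivity
  rw [← hk]
  field_simp

def Fd (A : (n : ℕ) → (Fin (n + 1) → ℝ) → (Fin (n + 1) → ℝ) → (Fin (n + 1) → ℝ) → ℝ)
    (n : ℕ) (I J : Fin (n + 1)) : ℝ := A n (bunif n) (Zvec n I) (Zvec n J)

variable {A : (n : ℕ) → (Fin (n + 1) → ℝ) → (Fin (n + 1) → ℝ) → (Fin (n + 1) → ℝ) → ℝ}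

lemma Zvec_sum (n : ℕ) : ∑ i : Fin (n+1), Zvec n i = 0 := by
  funext k
  rw [Finset.sum_apply]
  show ∑ i : Fin (n+1), ((if k = i then (1:ℝ) else 0) - 1/((n:ℝ)+1)) = 0
  rw [Finset.sum_sub_distrib, Finset.sum_ite_eq Finset.univ k (fun _ => (1:ℝ))]
  rw [Finset.sum_const, Finset.card_univ, Fintype.card_fin, nsmul_eq_mul]
  push_cast
  have : ((n:ℝ)+1) ≠ 0 := by positivity
  field_simp
  simp

lemma Fd_row_sum (hsymm : SymmTF A) {n : ℕ} (hn : 0 < n) (I : Fin (n+1)) :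
    ∑ J : Fin (n+1), Fd A n I J = 0 := by
  have hB := hsymm n hn (bunif n) (bunif_mem hn)
  have h := bil_sum hB Finset.univ (fun J => Zvec n J) (Zvec n I)
  rw [Zvec_sum, bil_zero hB] at h
  have h2 : ∑ J : Fin (n+1), A n (bunif n) (Zvec n J) (Zvec n I)
      = ∑ J : Fin (n+1), Fd A n I J :=
    Finset.sum_congr rfl (fun J _ => hB.1 _ _)
  rw [← h2, ← h]

lemma step (hsymm : SymmTF A) (hinv : InvariantSP A) {n : ℕ} (hn : 0 < n) (o : ℝ)
    (hoff : ∀ i j : Fin (n+1), i ≠ j → Fd A n i j = o)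
    (hdiag : ∀ i : Fin (n+1), Fd A n i i = -(n:ℝ) * o) :
    (∀ I J : Fin (n+2), I ≠ J → Fd A (n+1) I J = o * ((n:ℝ)+2)/((n:ℝ)+1)) ∧
    (∀ I : Fin (n+2), Fd A (n+1) I I = -((n:ℝ)+1) * (o * ((n:ℝ)+2)/((n:ℝ)+1))) := by
  have hN : (1:ℝ) ≤ (n:ℝ) := by exact_mod_cast hn
  have hNe1 : ((n:ℝ)+1) ≠ 0 := by positivity
  have hNe2 : ((n:ℝ)+2) ≠ 0 := by positivity
  have hB := hsymm (n+1) (by omega) (bunif (n+1)) (bunif_mem (by omega))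
  have hFs : ∀ I J : Fin (n+2), Fd A (n+1) I J = Fd A (n+1) J I := fun I J => hB.1 _ _
  set I0 : Fin (n+1) := ⟨0, by omega⟩ with hI0
  set I1 : Fin (n+1) := ⟨1, by omega⟩ with hI1
  have h01 : I0 ≠ I1 := by simp [hI0, hI1, Fin.ext_iff]
  have hab : I0.castSucc ≠ I1.castSucc := by simp [hI0, hI1, Fin.ext_iff]
  have hac : I0.castSucc ≠ Fin.last (n+1) := by simp [hI0, Fin.ext_iff]
  have hbc : I1.castSucc ≠ Fin.last (n+1) := by simp [hI1, Fin.ext_iff]; omega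
  -- off-diagonal master equation
  have EOff : ∀ I J K : Fin (n+2), I ≠ J → I ≠ K → J ≠ K →
      ((n:ℝ)+1)^2 * Fd A (n+1) I J + ((n:ℝ)+1) * Fd A (n+1) I K
        + ((n:ℝ)+1) * Fd A (n+1) K J + Fd A (n+1) K K = ((n:ℝ)+2)^2 * o := by
    intro I J K hIJ hIK hJK
    obtain ⟨σ, hs1, hs2, hs3⟩ := perm3 hab hac hbc hIJ hIK hJK
    have hp := keyPoly hsymm hinv hn σ I0 I1
    rw [hs1, hs2, hs3] at hp
    have ho := hoff I0 I1 h01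
    rw [Fd] at ho
    rw [ho] at hp
    exact hp
  -- diagonal master equation
  have EDiag : ∀ I K : Fin (n+2), I ≠ K →
      ((n:ℝ)+1)^2 * Fd A (n+1) I I + ((n:ℝ)+1) * Fd A (n+1) I K
        + ((n:ℝ)+1) * Fd A (n+1) K I + Fd A (n+1) K K = ((n:ℝ)+2)^2 * (-(n:ℝ) * o) := by
    intro I K hIK
    obtain ⟨J, hJI, hJK⟩ : ∃ J : Fin (n+2), J ≠ I ∧ J ≠ K := by
      have hcompl : ({I, K}ᶜ : Finset (Fin (n+2))).Nonempty := by
        rw [← Finset.card_pos, Finset.card_compl]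
        have h2 : ({I, K} : Finset (Fin (n+2))).card ≤ 2 := by
          apply le_trans (Finset.card_insert_le _ _)
          simp
        have h3 : Fintype.card (Fin (n+2)) = n + 2 := Fintype.card_fin _
        omega
      obtain ⟨J, hJ⟩ := hcompl
      rw [Finset.mem_compl, Finset.mem_insert, Finset.mem_singleton] at hJ
      push_neg at hJ
      exact ⟨J, hJ.1, hJ.2⟩
    obtain ⟨σ, hs1, hs2, hs3⟩ := perm3 hab hac hbc hJI.symm hIK (fun h => hJK h)
    have hp := keyPoly hsymm hinv hn σ I0 I0
    rw [hs1, hs3] at hp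
    have ho := hdiag I0
    rw [Fd] at ho
    rw [ho] at hp
    exact hp
  -- all diagonal entries agree
  have hdd : ∀ I K : Fin (n+2), Fd A (n+1) I I = Fd A (n+1) K K := by
    intro I K
    rcases eq_or_ne I K with h | h
    · rw [h]
    · have e1 := EDiag I K h
      have e2 := EDiag K I h.symm
      have hfac : (((n:ℝ)+1)^2 - 1) * (Fd A (n+1) I I - Fd A (n+1) K K) = 0 := by
        linear_combination e1 - e2
      have h2 : (((n:ℝ)+1)^2 - 1) ≠ 0 := by nlinarith
      rcases mul_eq_zero.mp hfac with h' | h'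
      · exact absurd h' h2
      · linarith
  set K0 : Fin (n+2) := ⟨0, by omega⟩ with hK0
  set K1 : Fin (n+2) := ⟨1, by omega⟩ with hK1
  have hK01 : K0 ≠ K1 := by simp [hK0, hK1, Fin.ext_iff]
  set d : ℝ := Fd A (n+1) K0 K0 with hd
  set G : ℝ := ((((n:ℝ)+2)^2 * (-(n:ℝ)*o)) - ((((n:ℝ)+1)^2 + 1) * d)) / (2*((n:ℝ)+1)) with hGdef
  -- all off-diagonal entries equal G
  have hG : ∀ I J : Fin (n+2), I ≠ J → Fd A (n+1) I J = G := by
    intro I J h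
    have e := EDiag I J h
    rw [hFs J I, hdd I K0, hdd J K0] at e
    rw [hGdef, eq_div_iff (by positivity)]
    linear_combination e
  -- row sum relation
  have hrow : d + ((n:ℝ)+1) * G = 0 := by
    have hsum := Fd_row_sum hsymm (n := n+1) (by omega) K0
    rw [← Finset.add_sum_erase _ _ (Finset.mem_univ K0)] at hsum
    have hrepl : ∑ J ∈ Finset.univ.erase K0, Fd A (n+1) K0 J
        = ∑ J ∈ Finset.univ.erase K0, G := by
      refine Finset.sum_congr rfl (fun J hJ => ?_)
      exact hG K0 J (Ne.symm (Finset.mem_erase.mp hJ).1)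
    rw [hrepl, Finset.sum_const, Finset.card_erase_of_mem (Finset.mem_univ _),
      Finset.card_univ, Fintype.card_fin, nsmul_eq_mul] at hsum
    push_cast at hsum
    linarith
  -- value of G
  have hGval : G = o * ((n:ℝ)+2) / ((n:ℝ)+1) := by
    have e := EDiag K0 K1 hK01
    rw [hFs K1 K0, hG K0 K1 hK01, hdd K1 K0, ← hd] at e
    have hmul : ((n:ℝ)*((n:ℝ)+2)) * (((n:ℝ)+1) * G) = ((n:ℝ)*((n:ℝ)+2)) * (o * ((n:ℝ)+2)) := by
      linear_combination ((((n:ℝ)+1)^2 + 1)) * hrow - e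
    have hnz : ((n:ℝ)*((n:ℝ)+2)) ≠ 0 := by positivity
    have h2 := mul_left_cancel₀ hnz hmul
    rw [eq_div_iff hNe1]
    linarith
  constructor
  · intro I J h
    rw [hG I J h, hGval]
  · intro I
    rw [hdd I K0, ← hd]
    rw [← hGval]
    linarith

variable {A : (n : ℕ) → (Fin (n + 1) → ℝ) → (Fin (n + 1) → ℝ) → (Fin (n + 1) → ℝ) → ℝ}

lemma base (hsymm : SymmTF A) :
    (∀ i j : Fin 2, i ≠ j → Fd A 1 i j = Fd A 1 0 1) ∧
    (∀ i : Fin 2, Fd A 1 i i = -(Fd A 1 0 1)) := by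
  have hB := hsymm 1 one_pos (bunif 1) (bunif_mem one_pos)
  have hsy : ∀ i j : Fin 2, Fd A 1 i j = Fd A 1 j i := fun i j => hB.1 _ _
  have hz : Zvec 1 0 = (-1:ℝ) • Zvec 1 1 := by
    funext k
    fin_cases k <;> simp [Zvec] <;> norm_num
  have hcase : ∀ m : Fin 2, m = 0 ∨ m = 1 := by decide
  have d0 : Fd A 1 0 0 = -(Fd A 1 0 1) := by
    have h := bil_smul hB (-1) (Zvec 1 1) (Zvec 1 0)
    rw [← hz] at h
    have h2 : A 1 (bunif 1) (Zvec 1 1) (Zvec 1 0) = A 1 (bunif 1) (Zvec 1 0) (Zvec 1 1) :=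
      hB.1 _ _
    show A 1 (bunif 1) (Zvec 1 0) (Zvec 1 0) = -(A 1 (bunif 1) (Zvec 1 0) (Zvec 1 1))
    rw [h, h2]
    ring
  have d1 : Fd A 1 1 1 = -(Fd A 1 0 1) := by
    have h := bil_smul hB (-1) (Zvec 1 1) (Zvec 1 1)
    rw [← hz] at h
    show A 1 (bunif 1) (Zvec 1 1) (Zvec 1 1) = -(A 1 (bunif 1) (Zvec 1 0) (Zvec 1 1))
    linarith
  constructor
  · intro i j hij
    rcases hcase i with hi | hi <;> rcases hcase j with hj | hj <;> subst hi <;> subst hj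
    · exact absurd rfl hij
    · rfl
    · exact hsy 1 0
    · exact absurd rfl hij
  · intro i
    rcases hcase i with hi | hi <;> subst hi
    · exact d0
    · exact d1

lemma main (hsymm : SymmTF A) (hinv : InvariantSP A) :
    ∀ n : ℕ, 0 < n →
      (∀ i j : Fin (n+1), i ≠ j → Fd A n i j = (Fd A 1 0 1) * ((n:ℝ)+1)/2) ∧
      (∀ i : Fin (n+1), Fd A n i i = -(n:ℝ) * ((Fd A 1 0 1) * ((n:ℝ)+1)/2)) := by
  intro n
  induction n with
  | zero => intro h; omega
  | succ k ih =>
    intro _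
    rcases Nat.eq_zero_or_pos k with hk | hk
    · subst hk
      obtain ⟨b1, b2⟩ := base hsymm
      constructor
      · intro i j hij
        refine (b1 i j hij).trans ?_
        norm_num
      · intro i
        refine (b2 i).trans ?_
        norm_num
    · obtain ⟨ho, hd⟩ := ih hk
      obtain ⟨s1, s2⟩ := step hsymm hinv hk ((Fd A 1 0 1) * ((k:ℝ)+1)/2) ho hd
      have hk1 : ((k:ℝ)+1) ≠ 0 := by positivity
      constructor
      · intro i j hij
        refine (s1 i j hij).trans ?_
        push_cast
        field_simp
        ring
      · intro i
        refine (s2 i).trans ?_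
        push_cast
        field_simp
        ring

end DOUaux

/-- For a family of symmetric `(0,2)`-tensor fields invariant under scalar
patched Markov embeddings, the quantities
`A_n(Z_i^n, Z_i^n)_{b_n}/(n(n+1))` and `-A_n(Z_i^n, Z_j^n)_{b_n}/(n+1)`
(`i ≠ j`) coincide and are independent of `n`, `i` and `j`. -/
theorem diag_offdiag_at_uniform
    (A : (n : ℕ) → (Fin (n + 1) → ℝ) → (Fin (n + 1) → ℝ) → (Fin (n + 1) → ℝ) → ℝ)
    (hsymm : SymmTF A) (hinv : InvariantSP A) :
    ∃ c : ℝ, ∀ n : ℕ, 0 < n → ∀ i j : Fin (n + 1), i ≠ j →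
      A n (bunif n) (Zvec n i) (Zvec n i) / ((n : ℝ) * ((n : ℝ) + 1)) = c ∧
      -(A n (bunif n) (Zvec n i) (Zvec n j)) / ((n : ℝ) + 1) = c := by
  refine ⟨-(A 1 (bunif 1) (Zvec 1 0) (Zvec 1 1)) / 2, ?_⟩
  intro n hn i j hij
  obtain ⟨ho, hd⟩ := DOUaux.main hsymm hinv n hn
  have hdi := hd i
  have hoi := ho i j hij
  simp only [DOUaux.Fd] at hdi hoi
  have hN : (1:ℝ) ≤ (n:ℝ) := by exact_mod_cast hn
  have h1 : (n:ℝ) ≠ 0 := by positivity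
  have h2 : ((n:ℝ)+1) ≠ 0 := by positivity
  constructor
  · rw [hdi]
    field_simp
  · rw [hoi]
    field_simp
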